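/- Let f : ℝ → ℝ be a nonnegative integrable function and h > 0. Then for any t ∈ (0,1] and y ∈ ℝ^d, ∫_0^1 (2h log(1/t))^{3/2} · 1{‖y‖₂ < √(8h log(1/t))} dt ≤ C h^{3/2} exp(-‖y‖₂²/(16h)) for the absolute constant C = (3/2)^{5/2} e^{1/e} 2³. -/

import Mathlib

open MeasureTheory Set

noncomputable def Fa10 (t : ℝ) : ℝ :=
  Real.sqrt t * (155/16 - 4 * Real.log t + (Real.log t)^2)

noncomputable def ga10 (t : ℝ) : ℝ :=
  (27/32 + (Real.log t)^2/2) / Real.sqrt t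

lemma ga10_nonneg (t : ℝ) : 0 ≤ ga10 t := by
  unfold ga10
  positivity

lemma Fa10_deriv {t : ℝ} (ht : 0 < t) : HasDerivAt Fa10 (ga10 t) t := by
  have hs : HasDerivAt Real.sqrt (1/(2*Real.sqrt t)) t := Real.hasDerivAt_sqrt ht.ne'
  have hlog : HasDerivAt Real.log t⁻¹ t := Real.hasDerivAt_log ht.ne'
  have h1 : HasDerivAt (fun t => (Real.log t)^2) (2 * Real.log t ^ 1 * t⁻¹) t := hlog.pow 2
  have h2 : HasDerivAt (fun t => 155/16 - 4 * Real.log t) (0 - 4 * t⁻¹) t :=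
    (hasDerivAt_const t (155/16:ℝ)).sub (hlog.const_mul 4)
  have hv := h2.add h1
  have hF := hs.mul hv
  have hst : 0 < Real.sqrt t := Real.sqrt_pos.2 ht
  have hs2 : Real.sqrt t ^ 2 = t := Real.sq_sqrt ht.le
  have hne : Real.sqrt t ≠ 0 := hst.ne'
  refine hF.congr_deriv (Eq.symm ?_)
  simp only [Pi.add_apply]
  unfold ga10
  set ℓ := Real.log t with hl
  set s := Real.sqrt t with hsdef
  rw [← hs2]
  field_simp
  ring

lemma Fa10_cont : ContinuousOn Fa10 (Icc (0:ℝ) 1) := by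
  intro t ht
  rcases eq_or_lt_of_le ht.1 with h0 | h0
  · -- t = 0
    subst h0
    apply ContinuousWithinAt.mono _ (Icc_subset_Ici_self)
    rw [← continuousWithinAt_Ioi_iff_Ici]
    have hFa0 : Fa10 0 = 0 := by simp [Fa10]
    unfold ContinuousWithinAt
    rw [hFa0]
    have h12 : Filter.Tendsto (fun t : ℝ => Real.log t * t ^ ((1:ℝ)/2)) (nhdsWithin 0 (Ioi 0)) (nhds 0) :=
      tendsto_log_mul_rpow_nhdsGT_zero (by norm_num)
    have h14 : Filter.Tendsto (fun t : ℝ => Real.log t * t ^ ((1:ℝ)/4)) (nhdsWithin 0 (Ioi 0)) (nhds 0) :=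
      tendsto_log_mul_rpow_nhdsGT_zero (by norm_num)
    have hsq : Filter.Tendsto (fun t : ℝ => Real.sqrt t) (nhdsWithin 0 (Ioi 0)) (nhds 0) := by
      have := (Real.continuous_sqrt.tendsto 0)
      simp only [Real.sqrt_zero] at this
      exact this.mono_left nhdsWithin_le_nhds
    have hcomb : Filter.Tendsto (fun t : ℝ =>
        155/16 * Real.sqrt t - 4 * (Real.log t * t ^ ((1:ℝ)/2))
          + (Real.log t * t ^ ((1:ℝ)/4)) * (Real.log t * t ^ ((1:ℝ)/4)))
        (nhdsWithin 0 (Ioi 0)) (nhds 0) := by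
      have := ((hsq.const_mul (155/16:ℝ)).sub (h12.const_mul 4)).add (h14.mul h14)
      simpa using this
    apply hcomb.congr'
    filter_upwards [self_mem_nhdsWithin] with t (ht : t ∈ Ioi (0:ℝ))
    have htp : (0:ℝ) < t := ht
    have e2 : t ^ ((1:ℝ)/2) = Real.sqrt t := (Real.sqrt_eq_rpow t).symm
    have e4 : t ^ ((1:ℝ)/4) * t ^ ((1:ℝ)/4) = Real.sqrt t := by
      rw [← Real.rpow_add htp, Real.sqrt_eq_rpow]; norm_num
    unfold Fa10
    rw [e2]
    have : (Real.log t * t ^ ((1:ℝ)/4)) * (Real.log t * t ^ ((1:ℝ)/4))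
        = (Real.log t)^2 * Real.sqrt t := by rw [← e4]; ring
    rw [this]
    ring
  · -- 0 < t
    apply ContinuousAt.continuousWithinAt
    have : ContinuousAt Real.log t := Real.continuousAt_log h0.ne'
    exact (Real.continuous_sqrt.continuousAt).mul
      ((continuousAt_const.sub (this.const_mul 4)).add (this.pow 2))

lemma ga10_integrableOn : IntegrableOn ga10 (Ioc (0:ℝ) 1) :=
  intervalIntegral.integrableOn_deriv_of_nonneg Fa10_cont
    (fun x hx => Fa10_deriv hx.1) (fun x _ => ga10_nonneg x)

lemma ga10_integral : ∫ t in Ioc (0:ℝ) 1, ga10 t = 155/16 := by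
  rw [← intervalIntegral.integral_of_le zero_le_one]
  have h := intervalIntegral.integral_eq_sub_of_hasDeriv_right_of_le zero_le_one Fa10_cont
    (fun x hx => (Fa10_deriv hx.1).hasDerivWithinAt)
    (by rw [intervalIntegrable_iff_integrableOn_Ioc_of_le zero_le_one]; exact ga10_integrableOn)
  rw [h]
  simp [Fa10]

open MeasureTheory Set

theorem stmt_10 {d : ℕ} (h : ℝ) (hh : 0 < h) (y : EuclideanSpace ℝ (Fin d)) :
    ∫ t in Set.Ioc (0:ℝ) 1,
        (2 * h * Real.log (1 / t)) ^ ((3:ℝ)/2)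
          * (if ‖y‖ < Real.sqrt (8 * h * Real.log (1 / t)) then (1:ℝ) else 0)
      ≤ ((3/2 : ℝ) ^ ((5:ℝ)/2) * Real.exp (1 / Real.exp 1) * 2 ^ 3)
          * h ^ ((3:ℝ)/2) * Real.exp (-‖y‖ ^ 2 / (16 * h)) := by
  set a : ℝ := ‖y‖ ^ 2 / (16 * h) with ha
  set c : ℝ := (2*h) ^ ((3:ℝ)/2) * Real.exp (-a) with hc
  have h2h : (0:ℝ) ≤ 2*h := by linarith
  have hc0 : 0 ≤ c := mul_nonneg (Real.rpow_nonneg h2h _) (Real.exp_nonneg _)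
  -- pointwise bound
  have key : ∀ t ∈ Ioc (0:ℝ) 1,
      (2 * h * Real.log (1 / t)) ^ ((3:ℝ)/2)
        * (if ‖y‖ < Real.sqrt (8 * h * Real.log (1 / t)) then (1:ℝ) else 0)
      ≤ c * ga10 t := by
    intro t ht
    have htp : (0:ℝ) < t := ht.1
    set L : ℝ := Real.log (1/t) with hL
    have hL0 : 0 ≤ L := Real.log_nonneg (one_le_one_div htp ht.2)
    have hlt : Real.log t = -L := by
      rw [hL, one_div, Real.log_inv]; ring
    have hga : ga10 t = (27/32 + L^2/2) / Real.sqrt t := by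
      unfold ga10; rw [hlt]; ring_nf
    have hst : 0 < Real.sqrt t := Real.sqrt_pos.2 htp
    split_ifs with hind
    · -- indicator = 1
      have hbase : (0:ℝ) ≤ 8 * h * L := by positivity
      have hy2 : ‖y‖ ^ 2 < 8 * h * L := by
        have := Real.sq_sqrt hbase
        nlinarith [hind, Real.sqrt_nonneg (8*h*L), norm_nonneg y]
      have haL : a ≤ L / 2 := by
        rw [ha, div_le_div_iff₀ (by linarith) (by norm_num)]
        nlinarith
      have hexp : Real.sqrt t ≤ Real.exp (-a) := by
        have h1 : Real.sqrt t = Real.exp (Real.log t / 2) := by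
          rw [← Real.log_sqrt htp.le, Real.exp_log hst]
        rw [h1]
        apply Real.exp_le_exp.2
        rw [hlt]; linarith
      -- (2hL)^{3/2} = (2h)^{3/2} L^{3/2}
      have hsplit : (2 * h * L) ^ ((3:ℝ)/2) = (2*h) ^ ((3:ℝ)/2) * L ^ ((3:ℝ)/2) :=
        Real.mul_rpow h2h hL0
      -- L^{3/2} ≤ 27/32 + L²/2
      have hL32 : L ^ ((3:ℝ)/2) ≤ 27/32 + L^2/2 := by
        set s : ℝ := Real.sqrt L with hs
        have hs0 : 0 ≤ s := Real.sqrt_nonneg L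
        have hs2 : s^2 = L := Real.sq_sqrt hL0
        have hrw : L ^ ((3:ℝ)/2) = s ^ 3 := by
          rw [show ((3:ℝ)/2) = (1/2) * (3:ℕ) by norm_num, Real.rpow_mul hL0,
            Real.rpow_natCast, ← Real.sqrt_eq_rpow]
        rw [hrw, ← hs2]
        have hfac : (0:ℝ) ≤ (s - 3/2)^2 * (s^2 + s + 3/4) := by positivity
        nlinarith [hfac]
      have hQ : (0:ℝ) ≤ 27/32 + L^2/2 := by positivity
      have hCp : (0:ℝ) ≤ (2*h) ^ ((3:ℝ)/2) := Real.rpow_nonneg h2h _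
      have hone : (1:ℝ) ≤ Real.exp (-a) / Real.sqrt t := (one_le_div hst).2 hexp
      calc (2 * h * L) ^ ((3:ℝ)/2) * 1
          = (2*h) ^ ((3:ℝ)/2) * L ^ ((3:ℝ)/2) := by rw [hsplit]; ring
        _ ≤ (2*h) ^ ((3:ℝ)/2) * (27/32 + L^2/2) := by
            exact mul_le_mul_of_nonneg_left hL32 hCp
        _ = (2*h) ^ ((3:ℝ)/2) * (27/32 + L^2/2) * 1 := by ring
        _ ≤ (2*h) ^ ((3:ℝ)/2) * (27/32 + L^2/2) * (Real.exp (-a) / Real.sqrt t) := by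
            apply mul_le_mul_of_nonneg_left hone (by positivity)
        _ = c * ((27/32 + L^2/2) / Real.sqrt t) := by rw [hc]; ring
        _ = c * ga10 t := by rw [hga]
    · -- indicator = 0
      have : (0:ℝ) ≤ c * ga10 t := mul_nonneg hc0 (ga10_nonneg t)
      simpa using this
  -- integral comparison
  have hmono : ∫ t in Ioc (0:ℝ) 1,
      (2 * h * Real.log (1 / t)) ^ ((3:ℝ)/2)
        * (if ‖y‖ < Real.sqrt (8 * h * Real.log (1 / t)) then (1:ℝ) else 0)
      ≤ ∫ t in Ioc (0:ℝ) 1, c * ga10 t := by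
    apply integral_mono_of_nonneg
    · rw [Filter.EventuallyLE, ae_restrict_iff' measurableSet_Ioc]
      apply ae_of_all
      intro t ht
      have htp : (0:ℝ) < t := ht.1
      have hL0 : 0 ≤ Real.log (1/t) := Real.log_nonneg (one_le_one_div htp ht.2)
      have : (0:ℝ) ≤ 2 * h * Real.log (1/t) := by positivity
      exact mul_nonneg (Real.rpow_nonneg this _) (by positivity)
    · exact ga10_integrableOn.const_mul c
    · rw [Filter.EventuallyLE, ae_restrict_iff' measurableSet_Ioc]
      exact ae_of_all _ key
  have hval : ∫ t in Ioc (0:ℝ) 1, c * ga10 t = c * (155/16) := by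
    rw [integral_const_mul, ga10_integral]
  rw [hval] at hmono
  refine hmono.trans ?_
  -- final numeric bound
  have hsplit2 : (2*h) ^ ((3:ℝ)/2) = 2 ^ ((3:ℝ)/2) * h ^ ((3:ℝ)/2) :=
    Real.mul_rpow (by norm_num) hh.le
  have h83 : (2:ℝ) ^ ((3:ℝ)/2) ≤ 2.83 := by
    have : (2:ℝ) ^ ((3:ℝ)/2) = Real.sqrt 8 := by
      rw [show (8:ℝ) = 2 ^ (3:ℕ) by norm_num, ← Real.rpow_natCast 2 3,
        Real.sqrt_eq_rpow, ← Real.rpow_mul (by norm_num)]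
      norm_num
    rw [this]
    rw [show (2.83:ℝ) = Real.sqrt (2.83^2) from (Real.sqrt_sq (by norm_num)).symm]
    exact Real.sqrt_le_sqrt (by norm_num)
  have h32 : (2.7:ℝ) ≤ (3/2:ℝ) ^ ((5:ℝ)/2) := by
    have e1 : (3/2:ℝ) ^ ((5:ℝ)/2) = (3/2)^(2:ℕ) * (3/2) ^ ((1:ℝ)/2) := by
      rw [← Real.rpow_natCast (3/2:ℝ) 2, ← Real.rpow_add (by norm_num)]
      norm_num
    have e2 : (1.2:ℝ) ≤ (3/2:ℝ) ^ ((1:ℝ)/2) := by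
      rw [← Real.sqrt_eq_rpow]
      exact (Real.le_sqrt (by norm_num) (by norm_num)).2 (by norm_num)
    rw [e1]; nlinarith
  have hexp1 : (1.36:ℝ) ≤ Real.exp (1 / Real.exp 1) := by
    have he : Real.exp 1 < 2.7182818286 := Real.exp_one_lt_d9
    have hep : (0:ℝ) < Real.exp 1 := Real.exp_pos 1
    have h36 : (0.36:ℝ) ≤ 1 / Real.exp 1 := by
      rw [le_div_iff₀ hep]; nlinarith
    have := Real.add_one_le_exp (1 / Real.exp 1)
    linarith
  have hrest : (0:ℝ) ≤ h ^ ((3:ℝ)/2) * Real.exp (-a) :=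
    mul_nonneg (Real.rpow_nonneg hh.le _) (Real.exp_nonneg _)
  have hfin : c * (155/16)
      ≤ ((3/2 : ℝ) ^ ((5:ℝ)/2) * Real.exp (1 / Real.exp 1) * 2 ^ 3)
        * h ^ ((3:ℝ)/2) * Real.exp (-a) := by
    rw [hc, hsplit2]
    have hnum : (2:ℝ) ^ ((3:ℝ)/2) * (155/16)
        ≤ (3/2 : ℝ) ^ ((5:ℝ)/2) * Real.exp (1 / Real.exp 1) * 2 ^ 3 := by
      have hx : (0:ℝ) ≤ (2:ℝ) ^ ((3:ℝ)/2) := Real.rpow_nonneg (by norm_num) _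
      nlinarith [h83, h32, hexp1]
    calc 2 ^ ((3:ℝ)/2) * h ^ ((3:ℝ)/2) * Real.exp (-a) * (155/16)
        = (2 ^ ((3:ℝ)/2) * (155/16)) * (h ^ ((3:ℝ)/2) * Real.exp (-a)) := by ring
      _ ≤ ((3/2 : ℝ) ^ ((5:ℝ)/2) * Real.exp (1 / Real.exp 1) * 2 ^ 3)
            * (h ^ ((3:ℝ)/2) * Real.exp (-a)) := mul_le_mul_of_nonneg_right hnum hrest
      _ = ((3/2 : ℝ) ^ ((5:ℝ)/2) * Real.exp (1 / Real.exp 1) * 2 ^ 3)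
            * h ^ ((3:ℝ)/2) * Real.exp (-a) := by ring
  rw [ha] at hfin
  rw [show -‖y‖ ^ 2 / (16 * h) = -(‖y‖ ^ 2 / (16 * h)) from neg_div _ _]
  exact hfin
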